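/- For any two types T_1 and T_2, one has α(T_1) · α(T_2) ≤ 28224; in particular, (1/2)·α(T_1)·α(T_2) ≤ 14112. -/

import Mathlib

/-- For a tuple `T = [m₁, ..., m_r]`, `Θ(T) := -2 + ∑ᵢ (1 - 1/mᵢ)` as a rational number. -/
def Theta (T : List ℕ) : ℚ :=
  -2 + (T.map (fun m => 1 - (1 : ℚ) / m)).sum

/-- `T` is a type: `T = [m₁, ..., m_r]` with `r ≥ 3`, `2 ≤ m₁ ≤ ... ≤ m_r`, `Θ(T) > 0`,
`α(T) = 4/Θ(T)` a positive integer, and `mᵢ ∣ α(T)` for all `i`. -/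
def IsType (T : List ℕ) : Prop :=
  3 ≤ T.length ∧ T.Pairwise (· ≤ ·) ∧ (∀ m ∈ T, 2 ≤ m) ∧ 0 < Theta T ∧
    ∃ a : ℕ, 0 < a ∧ (a : ℚ) * Theta T = 4 ∧ ∀ m ∈ T, m ∣ a

lemma inv_anti (k m : ℕ) (hk : 0 < k) (h : k ≤ m) : (1:ℚ)/m ≤ 1/k :=
  one_div_le_one_div_of_le (by exact_mod_cast hk) (by exact_mod_cast h)

lemma key3 (a b c : ℕ) (ha : 2 ≤ a) (hab : a ≤ b) (hbc : b ≤ c)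
    (h : 0 < 1 - 1/(a:ℚ) - 1/(b:ℚ) - 1/(c:ℚ)) :
    1/42 ≤ 1 - 1/(a:ℚ) - 1/(b:ℚ) - 1/(c:ℚ) := by
  rcases (show a = 2 ∨ a = 3 ∨ 4 ≤ a by omega) with rfl | rfl | ha4
  · -- a = 2
    push_cast at h ⊢
    rcases (show b = 2 ∨ b = 3 ∨ b = 4 ∨ 5 ≤ b by omega) with rfl | rfl | rfl | hb5
    · -- b = 2 : contradiction
      push_cast at h
      have hc : (0:ℚ) < 1/(c:ℚ) := by
        have : (0:ℚ) < (c:ℚ) := by exact_mod_cast (show 0 < c by omega)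
        positivity
      linarith
    · -- b = 3
      push_cast at h ⊢
      have hc7 : 7 ≤ c := by
        by_contra hc
        have : (1:ℚ)/6 ≤ 1/(c:ℚ) := by
          exact_mod_cast inv_anti c 6 (by omega) (by omega)
        linarith
      have : (1:ℚ)/(c:ℚ) ≤ 1/7 := by exact_mod_cast inv_anti 7 c (by norm_num) hc7
      linarith
    · -- b = 4
      push_cast at h ⊢
      have hc5 : 5 ≤ c := by
        by_contra hc
        have : (1:ℚ)/4 ≤ 1/(c:ℚ) := by
          exact_mod_cast inv_anti c 4 (by omega) (by omega)
        linarith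
      have : (1:ℚ)/(c:ℚ) ≤ 1/5 := by exact_mod_cast inv_anti 5 c (by norm_num) hc5
      linarith
    · -- b ≥ 5
      have h1 : (1:ℚ)/(b:ℚ) ≤ 1/5 := by exact_mod_cast inv_anti 5 b (by norm_num) hb5
      have h2 : (1:ℚ)/(c:ℚ) ≤ 1/5 := by
        exact_mod_cast inv_anti 5 c (by norm_num) (le_trans hb5 hbc)
      linarith
  · -- a = 3
    push_cast at h ⊢
    rcases (show b = 3 ∨ 4 ≤ b by omega) with rfl | hb4
    · push_cast at h ⊢
      have hc4 : 4 ≤ c := by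
        by_contra hc
        have : (1:ℚ)/3 ≤ 1/(c:ℚ) := by
          exact_mod_cast inv_anti c 3 (by omega) (by omega)
        linarith
      have : (1:ℚ)/(c:ℚ) ≤ 1/4 := by exact_mod_cast inv_anti 4 c (by norm_num) hc4
      linarith
    · have h1 : (1:ℚ)/(b:ℚ) ≤ 1/4 := by exact_mod_cast inv_anti 4 b (by norm_num) hb4
      have h2 : (1:ℚ)/(c:ℚ) ≤ 1/4 := by
        exact_mod_cast inv_anti 4 c (by norm_num) (le_trans hb4 hbc)
      linarith
  · -- a ≥ 4
    have h1 : (1:ℚ)/(a:ℚ) ≤ 1/4 := by exact_mod_cast inv_anti 4 a (by norm_num) ha4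
    have h2 : (1:ℚ)/(b:ℚ) ≤ 1/4 := by
      exact_mod_cast inv_anti 4 b (by norm_num) (le_trans ha4 hab)
    have h3 : (1:ℚ)/(c:ℚ) ≤ 1/4 := by
      exact_mod_cast inv_anti 4 c (by norm_num) (le_trans ha4 (le_trans hab hbc))
    linarith

lemma key4 (a b c d : ℕ) (ha : 2 ≤ a) (hab : a ≤ b) (hbc : b ≤ c) (hcd : c ≤ d)
    (h : 0 < 2 - 1/(a:ℚ) - 1/(b:ℚ) - 1/(c:ℚ) - 1/(d:ℚ)) :
    1/42 ≤ 2 - 1/(a:ℚ) - 1/(b:ℚ) - 1/(c:ℚ) - 1/(d:ℚ) := by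
  have h1 : (1:ℚ)/(a:ℚ) ≤ 1/2 := by exact_mod_cast inv_anti 2 a (by norm_num) ha
  have h2 : (1:ℚ)/(b:ℚ) ≤ 1/2 := by
    exact_mod_cast inv_anti 2 b (by norm_num) (le_trans ha hab)
  have h3 : (1:ℚ)/(c:ℚ) ≤ 1/2 := by
    exact_mod_cast inv_anti 2 c (by norm_num) (le_trans ha (le_trans hab hbc))
  have hd3 : 3 ≤ d := by
    by_contra hd
    have : a = 2 ∧ b = 2 ∧ c = 2 ∧ d = 2 := by omega
    obtain ⟨rfl, rfl, rfl, rfl⟩ := this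
    push_cast at h
    norm_num at h
  have h4 : (1:ℚ)/(d:ℚ) ≤ 1/3 := by exact_mod_cast inv_anti 3 d (by norm_num) hd3
  linarith

lemma theta_cons (x : ℕ) (T : List ℕ) : Theta (x :: T) = (1 - 1/(x:ℚ)) + Theta T := by
  simp [Theta]; ring

lemma theta_lb (T : List ℕ) (hm : ∀ m ∈ T, 2 ≤ m) : -2 + (T.length : ℚ)/2 ≤ Theta T := by
  induction T with
  | nil => simp [Theta]
  | cons x xs ih =>
    have hx : 2 ≤ x := hm x (by simp)
    have h1 : (1:ℚ)/(x:ℚ) ≤ 1/2 := by exact_mod_cast inv_anti 2 x (by norm_num) hx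
    have h2 := ih (fun m hm' => hm m (by simp [hm']))
    rw [theta_cons]
    simp only [List.length_cons, Nat.cast_add, Nat.cast_one]
    linarith

lemma theta3_eq (a b c : ℕ) : Theta [a,b,c] = 1 - 1/(a:ℚ) - 1/b - 1/c := by
  simp [Theta]; ring

lemma theta4_eq (a b c d : ℕ) : Theta [a,b,c,d] = 2 - 1/(a:ℚ) - 1/b - 1/c - 1/d := by
  simp [Theta]; ring

lemma theta_ge (T : List ℕ) (hT : IsType T) : 1/42 ≤ Theta T := by
  obtain ⟨hlen, hs, hm, hpos, -⟩ := hT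
  rcases T with _ | ⟨a, _ | ⟨b, _ | ⟨c, rest⟩⟩⟩ <;> simp at hlen
  rcases rest with _ | ⟨d, rest2⟩
  · -- length 3
    have hab : a ≤ b := by simp [List.pairwise_cons] at hs; tauto
    have hbc : b ≤ c := by simp [List.pairwise_cons] at hs; tauto
    have ha : 2 ≤ a := hm a (by simp)
    rw [theta3_eq] at hpos ⊢
    exact key3 a b c ha hab hbc hpos
  · rcases rest2 with _ | ⟨e, rest3⟩
    · -- length 4
      have hab : a ≤ b := by simp [List.pairwise_cons] at hs; tauto
      have hbc : b ≤ c := by simp [List.pairwise_cons] at hs; tauto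
      have hcd : c ≤ d := by simp [List.pairwise_cons] at hs; tauto
      have ha : 2 ≤ a := hm a (by simp)
      rw [theta4_eq] at hpos ⊢
      exact key4 a b c d ha hab hbc hcd hpos
    · -- length ≥ 5
      set L := a :: b :: c :: d :: e :: rest3 with hL
      have h5 : (5:ℚ) ≤ (L.length : ℚ) := by
        have h : 5 ≤ L.length := by rw [hL]; simp
        exact_mod_cast h
      have hsum := theta_lb L hm
      linarith

lemma alpha_le (T : List ℕ) (hT : IsType T) (a : ℕ) (ha : (a : ℚ) * Theta T = 4) :
    a ≤ 168 := by
  have h42 := theta_ge T hT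
  have hna : (0:ℚ) ≤ (a:ℚ) := by positivity
  have key : (a:ℚ) * (1/42) ≤ (a:ℚ) * Theta T := mul_le_mul_of_nonneg_left h42 hna
  rw [ha] at key
  have : (a:ℚ) ≤ 168 := by linarith
  exact_mod_cast this

/-- For any two types `T₁`, `T₂` with `α`-values `a₁`, `a₂` (so `aᵢ · Θ(Tᵢ) = 4`,
i.e. `aᵢ = 4/Θ(Tᵢ)`), one has `a₁ · a₂ ≤ 28224`; in particular `(a₁ · a₂)/2 ≤ 14112`. -/
theorem alpha_mul_alpha_le_28224 (T₁ T₂ : List ℕ) (hT₁ : IsType T₁) (hT₂ : IsType T₂)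
    (a₁ a₂ : ℕ) (ha₁ : (a₁ : ℚ) * Theta T₁ = 4) (ha₂ : (a₂ : ℚ) * Theta T₂ = 4) :
    a₁ * a₂ ≤ 28224 ∧ (a₁ * a₂ : ℚ) / 2 ≤ 14112 := by
  have h1 := alpha_le T₁ hT₁ a₁ ha₁
  have h2 := alpha_le T₂ hT₂ a₂ ha₂
  have hmul : a₁ * a₂ ≤ 28224 := by
    calc a₁ * a₂ ≤ 168 * 168 := Nat.mul_le_mul h1 h2
    _ = 28224 := by norm_num
  refine ⟨hmul, ?_⟩
  have h3 : ((a₁ : ℚ) * a₂) ≤ 28224 := by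
    have : ((a₁ * a₂ : ℕ) : ℚ) ≤ 28224 := by exact_mod_cast hmul
    push_cast at this
    linarith
  linarith
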